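/- For a fixed weak composition s, the relation T ≼ R defined by inv(T) ⊆ inv(R) (multiset inclusion of tree-inversion multisets) is a partial order on the set of s-decreasing trees. -/

import Mathlib

/-- Planar rooted trees: leaves are unlabeled; internal nodes carry a natural
number label and an ordered list of children. -/
inductive STree : Type where
  | leaf : STree
  | node : ℕ → List STree → STree

namespace STree

mutual
  /-- `x` occurs as the label of an internal node of the tree. -/
  def mem (x : ℕ) : STree → Bool
    | .leaf => false
    | .node a cs => x == a || memL x cs
  def memL (x : ℕ) : List STree → Bool
    | [] => false
    | t :: ts => mem x t || memL x ts
end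

mutual
  /-- The list of internal node labels, in preorder. -/
  def labels : STree → List ℕ
    | .leaf => []
    | .node a cs => a :: labelsL cs
  def labelsL : List STree → List ℕ
    | [] => []
    | t :: ts => labels t ++ labelsL ts
end

mutual
  /-- Local well-formedness for the signature `s` : an internal node labeled `a`
  has `s a + 1` children, and all labels below it are smaller than `a`. -/
  def wf (s : ℕ → ℕ) : STree → Prop
    | .leaf => True
    | .node a cs => cs.length = s a + 1 ∧ (∀ b ∈ labelsL cs, b < a) ∧ wfL s cs
  def wfL (s : ℕ → ℕ) : List STree → Prop
    | [] => True
    | t :: ts => wf s t ∧ wfL s ts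
end

/-- `T` is an `s`-decreasing tree: its internal nodes are labeled bijectively by
`1, …, n`, node `i` has `s i + 1` ordered children, and all descendants of a node
have smaller labels. -/
def IsSDecreasingTree (n : ℕ) (s : ℕ → ℕ) (T : STree) : Prop :=
  wf s T ∧ (labels T).Perm (List.range' 1 n)

/-- Index of the first tree of the list containing the label `x`. -/
def idxOf (x : ℕ) : List STree → ℕ
  | [] => 0
  | t :: ts => if mem x t then 0 else idxOf x ts + 1

mutual
  /-- The cardinality `card_T(y,x)` of the pair `(y,x)` in the tree:
  `0` if `x` is (weakly) left of `y`, `i` if `x` lies in the `i`-th child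
  subtree of `y`, and `s y` if `x` is right of `y`. -/
  def card (s : ℕ → ℕ) (y x : ℕ) : STree → ℕ
    | .leaf => 0
    | .node a cs => if a = y then idxOf x cs else cardL s y x cs
  def cardL (s : ℕ → ℕ) (y x : ℕ) : List STree → ℕ
    | [] => 0
    | t :: ts =>
      if mem y t then
        (if mem x t then card s y x t else if memL x ts then s y else 0)
      else (if mem x t then 0 else cardL s y x ts)
end

/-- The tree-inversion multiset of `T`, as a multiplicity function on pairs
`(y,x)` with `1 ≤ x < y ≤ n`. -/
def treeInv (n : ℕ) (s : ℕ → ℕ) (T : STree) : ℕ → ℕ → ℕ := fun y x =>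
  if 1 ≤ x ∧ x < y ∧ y ≤ n then card s y x T else 0

/-- A multi inversion set on `1, …, n` bounded by the weak composition `s`. -/
def IsMultiInvSet (n : ℕ) (s : ℕ → ℕ) (I : ℕ → ℕ → ℕ) : Prop :=
  (∀ y x, I y x ≤ s y) ∧ ∀ y x, ¬(1 ≤ x ∧ x < y ∧ y ≤ n) → I y x = 0

/-- Transitivity: for `a < b < c`, `card(c,b) = i` implies `card(b,a) = 0` or
`card(c,a) ≥ i`. -/
def InvTransitive (I : ℕ → ℕ → ℕ) : Prop :=
  ∀ a b c : ℕ, a < b → b < c → I b a = 0 ∨ I c b ≤ I c a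

/-- Planarity: for `a < b < c`, `card(c,a) = i` implies `card(b,a) = s b` or
`card(c,b) ≥ i`. -/
def InvPlanar (s : ℕ → ℕ) (I : ℕ → ℕ → ℕ) : Prop :=
  ∀ a b c : ℕ, a < b → b < c → I b a = s b ∨ I c a ≤ I c b

/-- An `s`-tree-inversion set: a bounded multi inversion set that is transitive
and planar. -/
def IsTreeInvSet (n : ℕ) (s : ℕ → ℕ) (I : ℕ → ℕ → ℕ) : Prop :=
  IsMultiInvSet n s I ∧ InvTransitive I ∧ InvPlanar s I

/-- Inclusion of multi inversion sets: pointwise comparison of multiplicities. -/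
def invLE (I J : ℕ → ℕ → ℕ) : Prop := ∀ y x, I y x ≤ J y x

/-- The `s`-weak order: inclusion of tree-inversion multisets. -/
def sWeakLE (n : ℕ) (s : ℕ → ℕ) (T R : STree) : Prop :=
  invLE (treeInv n s T) (treeInv n s R)

/-- Union of multi inversion sets: pointwise maximum. -/
def invUnion (I J : ℕ → ℕ → ℕ) : ℕ → ℕ → ℕ := fun y x => max (I y x) (J y x)

/-- Transitive closure: `tc I (c,a)` is the maximal value of `I (b₁, b₂)` over
all transitivity paths `c = b₁ > b₂ > … > b_k = a` (consecutive entries have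
positive multiplicity). -/
noncomputable def tc (I : ℕ → ℕ → ℕ) : ℕ → ℕ → ℕ := fun c a =>
  sSup {v | ∃ (b : ℕ) (l : List ℕ),
    List.Chain (fun u w => w < u ∧ 0 < I u w) c (b :: l) ∧
    (b :: l).getLast (List.cons_ne_nil b l) = a ∧ v = I c b}

/-- Adding the inversion `(c,a)`: increase its multiplicity by one. -/
def addInv (I : ℕ → ℕ → ℕ) (c a : ℕ) : ℕ → ℕ → ℕ := fun y x =>
  if y = c ∧ x = a then I y x + 1 else I y x

mutual
  /-- `a` is a (proper) descendant of the node labeled `c`. -/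
  def descIn (c a : ℕ) : STree → Bool
    | .leaf => false
    | .node b cs => (b == c && memL a cs) || descInL c a cs
  def descInL (c a : ℕ) : List STree → Bool
    | [] => false
    | t :: ts => descIn c a t || descInL c a ts
end

mutual
  /-- `a` belongs to the rightmost child subtree of the node labeled `c`. -/
  def inRight (c a : ℕ) : STree → Bool
    | .leaf => false
    | .node b cs =>
      (b == c && (match cs.getLast? with
        | some t => mem a t
        | none => false)) || inRightL c a cs
  def inRightL (c a : ℕ) : List STree → Bool
    | [] => false
    | t :: ts => inRight c a t || inRightL c a ts
end

mutual
  /-- `a` belongs to the leftmost child subtree of the node labeled `c`. -/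
  def inLeft (c a : ℕ) : STree → Bool
    | .leaf => false
    | .node b cs =>
      (b == c && (match cs.head? with
        | some t => mem a t
        | none => false)) || inLeftL c a cs
  def inLeftL (c a : ℕ) : List STree → Bool
    | [] => false
    | t :: ts => inLeft c a t || inLeftL c a ts
end

mutual
  /-- The rightmost child subtree of the node labeled `a` is empty (a leaf). -/
  def rightEmpty (a : ℕ) : STree → Bool
    | .leaf => false
    | .node b cs =>
      (b == a && (match cs.getLast? with
        | some .leaf => true
        | _ => false)) || rightEmptyL a cs
  def rightEmptyL (a : ℕ) : List STree → Bool
    | [] => false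
    | t :: ts => rightEmpty a t || rightEmptyL a ts
end

/-- `(a,c)` is a tree-ascent of `T`: `a` is a descendant of `c`, not in the
rightmost subtree of `c`; `a` lies in the rightmost subtree of any `b` with
`a < b < c` having `a` as a descendant; and if `s a > 0` the rightmost
(strict right) subtree of `a` is empty. -/
def IsTreeAscent (s : ℕ → ℕ) (T : STree) (a c : ℕ) : Prop :=
  a < c ∧ descIn c a T = true ∧ inRight c a T = false ∧
  (∀ b : ℕ, a < b → b < c → descIn b a T = true → inRight b a T = true) ∧
  (0 < s a → rightEmpty a T = true)

/-- `a` is the root label of the tree. -/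
def hasRoot (a : ℕ) : STree → Bool
  | .leaf => false
  | .node b _ => a == b

mutual
  /-- `a` is a direct child of the node `c`, but not its rightmost child. -/
  def nonRightChild (c a : ℕ) : STree → Bool
    | .leaf => false
    | .node b cs => (b == c && cs.dropLast.any (hasRoot a)) || nonRightChildL c a cs
  def nonRightChildL (c a : ℕ) : List STree → Bool
    | [] => false
    | t :: ts => nonRightChild c a t || nonRightChildL c a ts
end

/-- `(a,c)` is a Tamari-ascent of `T`: `a` is a non-right child of `c`. -/
def IsTamariAscent (T : STree) (a c : ℕ) : Prop :=
  a < c ∧ nonRightChild c a T = true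

mutual
  /-- Horizontal mirror image of a tree: the order of children is reversed at
  every internal node. -/
  def mirror : STree → STree
    | .leaf => .leaf
    | .node a cs => .node a (mirrorL cs)
  def mirrorL : List STree → List STree
    | [] => []
    | t :: ts => mirrorL ts ++ [mirror t]
end

/-- `T` is an `s`-Tamari tree: `card(c,a) ≤ card(c,b)` for all `a < b < c`. -/
def TamariProp (n : ℕ) (s : ℕ → ℕ) (T : STree) : Prop :=
  ∀ a b c : ℕ, a < b → b < c → treeInv n s T c a ≤ treeInv n s T c b

/-- `T` is an `s`-maximal-Tamari tree: `card(b,a) = s b` implies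
`card(c,a) = s c` for all `c > b`. -/
def MaxTamariProp (n : ℕ) (s : ℕ → ℕ) (T : STree) : Prop :=
  ∀ a b c : ℕ, 1 ≤ a → a < b → b < c → c ≤ n →
    treeInv n s T b a = s b → treeInv n s T c a = s c

/-- The projection `π↓` on inversion sets:
`card_Q(c,a) = min { card_T(c,b) : a ≤ b < c }`. -/
noncomputable def pidownInv (n : ℕ) (s : ℕ → ℕ) (T : STree) : ℕ → ℕ → ℕ :=
  fun c a => sInf {v | ∃ b : ℕ, a ≤ b ∧ b < c ∧ v = treeInv n s T c b}

open scoped Classical in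
/-- The projection `π↑` on inversion sets: `card_R(c,a) = s c` if there is
`a < b < c` with `card_T(b,a) = s b`, and `card_R(c,a) = card_T(c,a)` otherwise. -/
noncomputable def piupInv (n : ℕ) (s : ℕ → ℕ) (T : STree) : ℕ → ℕ → ℕ :=
  fun c a =>
    if 1 ≤ a ∧ a < c ∧ c ≤ n then
      if ∃ b : ℕ, a < b ∧ b < c ∧ treeInv n s T b a = s b then s c
      else treeInv n s T c a
    else 0

/-! ### Auxiliary lemmas for the partial-order proof -/

@[simp] lemma labels_leaf : labels .leaf = [] := rfl
@[simp] lemma labels_node (a : ℕ) (cs : List STree) :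
    labels (.node a cs) = a :: labelsL cs := rfl
@[simp] lemma labelsL_nil : labelsL [] = [] := rfl
@[simp] lemma labelsL_cons (t : STree) (ts : List STree) :
    labelsL (t :: ts) = labels t ++ labelsL ts := rfl

mutual
  theorem mem_iff : ∀ (x : ℕ) (T : STree), mem x T = true ↔ x ∈ labels T
    | x, .leaf => by simp [mem]
    | x, .node a cs => by
        simp [mem, memL_iff x cs, labels]
  theorem memL_iff : ∀ (x : ℕ) (ts : List STree), memL x ts = true ↔ x ∈ labelsL ts
    | x, [] => by simp [memL]
    | x, t :: ts => by simp [memL, mem_iff x t, memL_iff x ts]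
end

lemma keyL (s : ℕ → ℕ) (N : ℕ)
    (IH : ∀ t d : STree, (labels t).length ≤ N → wf s t → wf s d →
      (labels t).Nodup → (labels t).Perm (labels d) →
      (∀ y x, x < y → y ∈ labels t → x ∈ labels t → card s y x t = card s y x d) →
      t = d) :
    ∀ cs ds : List STree, (labelsL cs).length ≤ N → cs.length = ds.length →
      wfL s cs → wfL s ds → (labelsL cs).Nodup →
      (labelsL cs).Perm (labelsL ds) →
      (∀ x ∈ labelsL cs, idxOf x cs = idxOf x ds) →
      (∀ y x, x < y → y ∈ labelsL cs → x ∈ labelsL cs →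
        cardL s y x cs = cardL s y x ds) →
      cs = ds := by
  intro cs
  induction cs with
  | nil =>
    intro ds _ hlen _ _ _ _ _ _
    exact (List.length_eq_zero_iff.mp hlen.symm).symm
  | cons t ts ihts =>
    intro ds hN hlen hwfc hwfd hnd hperm hidx hcard
    obtain ⟨d, ds', rfl⟩ : ∃ d ds', ds = d :: ds' := by
      cases ds with
      | nil => simp at hlen
      | cons d ds' => exact ⟨d, ds', rfl⟩
    -- basic facts
    have hndt : (labels t).Nodup ∧ (labelsL ts).Nodup ∧
        (labels t).Disjoint (labelsL ts) := by
      simpa [List.nodup_append'] using hnd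
    have hndd : (labelsL (d :: ds')).Nodup := hperm.nodup_iff.mp hnd
    have hndd' : (labels d).Nodup ∧ (labelsL ds').Nodup ∧
        (labels d).Disjoint (labelsL ds') := by
      simpa [List.nodup_append'] using hndd
    have hmemiff : ∀ x, x ∈ labelsL (t :: ts) ↔ x ∈ labelsL (d :: ds') :=
      fun x => hperm.mem_iff
    -- membership in heads agrees
    have hhead : ∀ x, x ∈ labels t ↔ x ∈ labels d := by
      intro x
      constructor
      · intro hx
        have hxc : x ∈ labelsL (t :: ts) := by simp [hx]
        have h0 : idxOf x (t :: ts) = 0 := by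
          simp [idxOf, (mem_iff x t).mpr hx]
        have h0' : idxOf x (d :: ds') = 0 := by rw [← hidx x hxc]; exact h0
        by_contra hxd
        have : mem x d = false := by
          cases h : mem x d
          · rfl
          · exact absurd ((mem_iff x d).mp h) hxd
        simp [idxOf, this] at h0'
      · intro hx
        have hxd : x ∈ labelsL (d :: ds') := by simp [hx]
        have hxc : x ∈ labelsL (t :: ts) := (hmemiff x).mpr hxd
        have h0' : idxOf x (d :: ds') = 0 := by
          simp [idxOf, (mem_iff x d).mpr hx]
        have h0 : idxOf x (t :: ts) = 0 := by rw [hidx x hxc]; exact h0'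
        by_contra hxt
        have : mem x t = false := by
          cases h : mem x t
          · rfl
          · exact absurd ((mem_iff x t).mp h) hxt
        simp [idxOf, this] at h0
    have hpermhd : (labels t).Perm (labels d) :=
      (List.perm_ext_iff_of_nodup hndt.1 hndd'.1).mpr hhead
    -- heads are equal
    have htd : t = d := by
      apply IH t d
      · calc (labels t).length ≤ (labelsL (t :: ts)).length := by
              simp [labelsL_cons]
          _ ≤ N := hN
      · exact hwfc.1
      · exact hwfd.1
      · exact hndt.1
      · exact hpermhd
      · intro y x hxy hyt hxt
        have h1 : cardL s y x (t :: ts) = card s y x t := by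
          simp [cardL, (mem_iff y t).mpr hyt, (mem_iff x t).mpr hxt]
        have h2 : cardL s y x (d :: ds') = card s y x d := by
          simp [cardL, (mem_iff y d).mpr ((hhead y).mp hyt),
            (mem_iff x d).mpr ((hhead x).mp hxt)]
        have := hcard y x hxy (by simp [hyt]) (by simp [hxt])
        rw [h1, h2] at this
        exact this
    subst htd
    -- tails
    have hpermtl : (labelsL ts).Perm (labelsL ds') := by
      have := hperm
      simp only [labelsL_cons] at this
      exact (List.perm_append_left_iff _).mp this
    have hmemtF : ∀ x ∈ labelsL ts, mem x t = false := by
      intro x hx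
      cases h : mem x t
      · rfl
      · exact absurd hx (hndt.2.2 ((mem_iff x t).mp h))
    have hmemtF' : ∀ x ∈ labelsL ds', mem x t = false := by
      intro x hx
      cases h : mem x t
      · rfl
      · exact absurd hx (hndd'.2.2 ((mem_iff x t).mp h))
    have htl : ts = ds' := by
      apply ihts ds'
      · calc (labelsL ts).length ≤ (labelsL (t :: ts)).length := by
              simp [labelsL_cons]
          _ ≤ N := hN
      · simpa using hlen
      · exact hwfc.2
      · exact hwfd.2
      · exact hndt.2.1
      · exact hpermtl
      · intro x hx
        have hxc : x ∈ labelsL (t :: ts) := by simp [hx]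
        have := hidx x hxc
        simp [idxOf, hmemtF x hx] at this
        exact this
      · intro y x hxy hy hx
        have hy' : y ∈ labelsL (t :: ts) := by simp [hy]
        have hx' : x ∈ labelsL (t :: ts) := by simp [hx]
        have := hcard y x hxy hy' hx'
        have hyd : y ∈ labelsL ds' := hpermtl.mem_iff.mp hy
        have hxd : x ∈ labelsL ds' := hpermtl.mem_iff.mp hx
        simpa [cardL, hmemtF y hy, hmemtF x hx, hmemtF' y hyd, hmemtF' x hxd]
          using this
    rw [htl]

lemma key (s : ℕ → ℕ) : ∀ (N : ℕ) (T R : STree), (labels T).length ≤ N →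
    wf s T → wf s R → (labels T).Nodup → (labels T).Perm (labels R) →
    (∀ y x, x < y → y ∈ labels T → x ∈ labels T → card s y x T = card s y x R) →
    T = R := by
  intro N
  induction N with
  | zero =>
    intro T R hN _ _ _ hperm _
    have hT : labels T = [] := List.length_eq_zero_iff.mp (Nat.le_zero.mp hN)
    have hR : labels R = [] := by
      have := hperm
      rw [hT] at this
      exact this.symm.eq_nil
    cases T with
    | leaf =>
      cases R with
      | leaf => rfl
      | node a ds => simp at hR
    | node a cs => simp at hT
  | succ M ihM =>
    intro T R hN hwfT hwfR hnd hperm hcard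
    cases T with
    | leaf =>
      have hR : labels R = [] := by
        have : ([] : List ℕ).Perm (labels R) := hperm
        exact this.symm.eq_nil
      cases R with
      | leaf => rfl
      | node a ds => simp at hR
    | node a cs =>
      cases R with
      | leaf =>
        have : labels (STree.node a cs) = [] := hperm.eq_nil
        simp at this
      | node a' ds =>
        obtain ⟨hlenc, hltc, hwfc⟩ := hwfT
        obtain ⟨hlend, hltd, hwfd⟩ := hwfR
        have haa' : a = a' := by
          have h1 : a' ∈ labels (STree.node a cs) := by
            exact hperm.mem_iff.mpr (by simp)
          have h2 : a ∈ labels (STree.node a' ds) := by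
            exact hperm.mem_iff.mp (by simp)
          simp at h1 h2
          rcases h1 with h1 | h1
          · exact h1.symm
          · have h3 := hltc a' h1
            rcases h2 with h2 | h2
            · exact h2
            · have h4 := hltd a h2
              omega
        subst haa'
        have hpermc : (labelsL cs).Perm (labelsL ds) := by
          have : (a :: labelsL cs).Perm (a :: labelsL ds) := hperm
          exact this.cons_inv
        have hndc : (labelsL cs).Nodup := by
          simp [List.nodup_cons] at hnd
          exact hnd.2
        have hanotin : a ∉ labelsL cs := by
          simp [List.nodup_cons] at hnd
          exact hnd.1
        have hcs : cs = ds := by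
          apply keyL s M (fun t d ht => ihM t d ht) cs ds
          · have : (labels (STree.node a cs)).length ≤ M + 1 := hN
            simpa using this
          · omega
          · exact hwfc
          · exact hwfd
          · exact hndc
          · exact hpermc
          · intro x hx
            have hxa : x < a := hltc x hx
            have := hcard a x hxa (by simp) (by simp [hx])
            simpa [card] using this
          · intro y x hxy hy hx
            have hya : y < a := hltc y hy
            have := hcard y x hxy (by simp [hy]) (by simp [hx])
            have hne : ¬ (a = y) := by omega
            simpa [card, hne] using this
        rw [hcs]

lemma treeInv_inj (n : ℕ) (s : ℕ → ℕ) (T R : STree)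
    (hT : IsSDecreasingTree n s T) (hR : IsSDecreasingTree n s R)
    (h : treeInv n s T = treeInv n s R) : T = R := by
  have hndT : (labels T).Nodup := hT.2.nodup_iff.mpr (List.nodup_range' (s := 1) (n := n))
  apply key s (labels T).length T R le_rfl hT.1 hR.1 hndT
    (hT.2.trans hR.2.symm)
  intro y x hxy hy hx
  have hy' : y ∈ List.range' 1 n := hT.2.mem_iff.mp hy
  have hx' : x ∈ List.range' 1 n := hT.2.mem_iff.mp hx
  rw [List.mem_range'_1] at hy' hx'
  have hcond : 1 ≤ x ∧ x < y ∧ y ≤ n := ⟨hx'.1, hxy, by omega⟩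
  have := congrFun (congrFun h y) x
  simpa [treeInv, hcond] using this

end STree

open STree in
/-- The `s`-weak order, i.e. inclusion of tree-inversion multisets, is a partial
order on the set of `s`-decreasing trees. -/
theorem sWeak_isPartialOrder (n : ℕ) (s : ℕ → ℕ) :
    IsPartialOrder {T : STree // IsSDecreasingTree n s T}
      (fun T R => sWeakLE n s T.1 R.1) := by
  refine { refl := ?_, trans := ?_, antisymm := ?_ }
  · intro T y x
    exact le_rfl
  · intro T R S hTR hRS y x
    exact le_trans (hTR y x) (hRS y x)
  · intro T R hTR hRT
    apply Subtype.ext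
    apply treeInv_inj n s T.1 R.1 T.2 R.2
    funext y x
    exact le_antisymm (hTR y x) (hRT y x)
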